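/- Let L = ℤ⁸, c = (1,-1,1,-1,1,-1,1,-1)ᵀ, T(x) = cᵀx, v₁ = (-1,1,-1,1,1,1,1,1)ᵀ, and (r,s) = (2,1). Then the sublattice spanned by the vectors 2eᵢ + cᵢ v₁ (i = 1,…,8) equals 2Γ₈', where Γ₈' = {x ∈ ℤ⁸ : Σxᵢ even} ∪ {x ∈ (ℤ+1/2)⁸ : Σxᵢ odd} is the odd coordinate system E₈ lattice. -/
import Mathlib


open Pointwise

/-- The odd coordinate system version `Γ₈'` of the `E₈` lattice:
integer vectors with even coordinate sum, together with half-integer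
vectors with odd coordinate sum. -/
def GammaEightOdd : Set (Fin 8 → ℝ) :=
  {x | (∀ i, ∃ k : ℤ, x i = k) ∧ ∃ k : ℤ, ∑ i, x i = 2 * k} ∪
    {x | (∀ i, ∃ k : ℤ, x i = k + 1 / 2) ∧ ∃ k : ℤ, ∑ i, x i = 2 * k + 1}

/-- `2 • Γ₈'` described directly. -/
def Qset : Set (Fin 8 → ℝ) :=
  {y | (∀ i, ∃ k : ℤ, y i = 2 * k) ∧ ∃ k : ℤ, ∑ i, y i = 4 * k} ∪
    {y | (∀ i, ∃ k : ℤ, y i = 2 * k + 1) ∧ ∃ k : ℤ, ∑ i, y i = 4 * k + 2}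

lemma Qset_eq : Qset = (2 : ℝ) • GammaEightOdd := by
  ext y
  rw [Set.mem_smul_set]
  constructor
  · rintro (⟨h1, m, hm⟩ | ⟨h1, m, hm⟩)
    · refine ⟨(2⁻¹ : ℝ) • y, Or.inl ⟨fun i => ?_, m, ?_⟩, ?_⟩
      · obtain ⟨k, hk⟩ := h1 i
        exact ⟨k, by simp [hk]⟩
      · simp only [Pi.smul_apply, smul_eq_mul, ← Finset.mul_sum, hm]; ring
      · rw [smul_smul]; norm_num
    · refine ⟨(2⁻¹ : ℝ) • y, Or.inr ⟨fun i => ?_, m, ?_⟩, ?_⟩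
      · obtain ⟨k, hk⟩ := h1 i
        exact ⟨k, by simp [hk]; ring⟩
      · simp only [Pi.smul_apply, smul_eq_mul, ← Finset.mul_sum, hm]; ring
      · rw [smul_smul]; norm_num
  · rintro ⟨x, (⟨h1, m, hm⟩ | ⟨h1, m, hm⟩), rfl⟩
    · refine Or.inl ⟨fun i => ?_, m, ?_⟩
      · obtain ⟨k, hk⟩ := h1 i
        exact ⟨k, by simp [hk]⟩
      · simp only [Pi.smul_apply, smul_eq_mul, ← Finset.mul_sum, hm]; ring
    · refine Or.inr ⟨fun i => ?_, m, ?_⟩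
      · obtain ⟨k, hk⟩ := h1 i
        exact ⟨k, by simp [hk]; ring⟩
      · simp only [Pi.smul_apply, smul_eq_mul, ← Finset.mul_sum, hm]; ring

/-- `Qset` is an additive subgroup of `ℝ⁸`. -/
def Qgrp : AddSubgroup (Fin 8 → ℝ) where
  carrier := Qset
  zero_mem' := Or.inl ⟨fun i => ⟨0, by simp⟩, 0, by simp⟩
  add_mem' := by
    rintro a b (⟨h1, m, hm⟩ | ⟨h1, m, hm⟩) (⟨h2, n, hn⟩ | ⟨h2, n, hn⟩)
    · refine Or.inl ⟨fun i => ?_, m + n, ?_⟩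
      · obtain ⟨k, hk⟩ := h1 i; obtain ⟨l, hl⟩ := h2 i
        exact ⟨k + l, by simp [hk, hl]; ring⟩
      · simp only [Pi.add_apply, Finset.sum_add_distrib, hm, hn]; push_cast; ring
    · refine Or.inr ⟨fun i => ?_, m + n, ?_⟩
      · obtain ⟨k, hk⟩ := h1 i; obtain ⟨l, hl⟩ := h2 i
        exact ⟨k + l, by simp [hk, hl]; push_cast; ring⟩
      · simp only [Pi.add_apply, Finset.sum_add_distrib, hm, hn]; push_cast; ring
    · refine Or.inr ⟨fun i => ?_, m + n, ?_⟩
      · obtain ⟨k, hk⟩ := h1 i; obtain ⟨l, hl⟩ := h2 i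
        exact ⟨k + l, by simp [hk, hl]; push_cast; ring⟩
      · simp only [Pi.add_apply, Finset.sum_add_distrib, hm, hn]; push_cast; ring
    · refine Or.inl ⟨fun i => ?_, m + n + 1, ?_⟩
      · obtain ⟨k, hk⟩ := h1 i; obtain ⟨l, hl⟩ := h2 i
        exact ⟨k + l + 1, by simp [hk, hl]; push_cast; ring⟩
      · simp only [Pi.add_apply, Finset.sum_add_distrib, hm, hn]; push_cast; ring
  neg_mem' := by
    rintro a (⟨h1, m, hm⟩ | ⟨h1, m, hm⟩)
    · refine Or.inl ⟨fun i => ?_, -m, ?_⟩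
      · obtain ⟨k, hk⟩ := h1 i
        exact ⟨-k, by simp [hk]⟩
      · simp only [Pi.neg_apply, Finset.sum_neg_distrib, hm]; push_cast; ring
    · refine Or.inr ⟨fun i => ?_, -m - 1, ?_⟩
      · obtain ⟨k, hk⟩ := h1 i
        exact ⟨-k - 1, by simp [hk]; push_cast; ring⟩
      · simp only [Pi.neg_apply, Finset.sum_neg_distrib, hm]; push_cast; ring

lemma hodd_aux (x : ℝ) (h : x = -1 ∨ x = 1 ∨ x = 3) : ∃ k : ℤ, x = 2 * k + 1 := by
  rcases h with rfl | rfl | rfl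
  exacts [⟨-1, by norm_num⟩, ⟨0, by norm_num⟩, ⟨1, by norm_num⟩]

lemma hsum_aux (x : ℝ) (h : x = 6 ∨ x = -2) : ∃ k : ℤ, x = 4 * k + 2 := by
  rcases h with rfl | rfl
  exacts [⟨1, by norm_num⟩, ⟨-1, by norm_num⟩]

lemma Cmk0 : (![1, -1, 1, -1, 1, -1, 1, -1] : Fin 8 → ℝ) ⟨0, by norm_num⟩ = 1 := rfl
lemma Vmk0 : (![-1, 1, -1, 1, 1, 1, 1, 1] : Fin 8 → ℝ) ⟨0, by norm_num⟩ = -1 := rfl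
lemma Cmk1 : (![1, -1, 1, -1, 1, -1, 1, -1] : Fin 8 → ℝ) ⟨1, by norm_num⟩ = -1 := rfl
lemma Vmk1 : (![-1, 1, -1, 1, 1, 1, 1, 1] : Fin 8 → ℝ) ⟨1, by norm_num⟩ = 1 := rfl
lemma Cmk2 : (![1, -1, 1, -1, 1, -1, 1, -1] : Fin 8 → ℝ) ⟨2, by norm_num⟩ = 1 := rfl
lemma Vmk2 : (![-1, 1, -1, 1, 1, 1, 1, 1] : Fin 8 → ℝ) ⟨2, by norm_num⟩ = -1 := rfl
lemma Cmk3 : (![1, -1, 1, -1, 1, -1, 1, -1] : Fin 8 → ℝ) ⟨3, by norm_num⟩ = -1 := rfl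
lemma Vmk3 : (![-1, 1, -1, 1, 1, 1, 1, 1] : Fin 8 → ℝ) ⟨3, by norm_num⟩ = 1 := rfl
lemma Cmk4 : (![1, -1, 1, -1, 1, -1, 1, -1] : Fin 8 → ℝ) ⟨4, by norm_num⟩ = 1 := rfl
lemma Vmk4 : (![-1, 1, -1, 1, 1, 1, 1, 1] : Fin 8 → ℝ) ⟨4, by norm_num⟩ = 1 := rfl
lemma Cmk5 : (![1, -1, 1, -1, 1, -1, 1, -1] : Fin 8 → ℝ) ⟨5, by norm_num⟩ = -1 := rfl
lemma Vmk5 : (![-1, 1, -1, 1, 1, 1, 1, 1] : Fin 8 → ℝ) ⟨5, by norm_num⟩ = 1 := rfl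
lemma Cmk6 : (![1, -1, 1, -1, 1, -1, 1, -1] : Fin 8 → ℝ) ⟨6, by norm_num⟩ = 1 := rfl
lemma Vmk6 : (![-1, 1, -1, 1, 1, 1, 1, 1] : Fin 8 → ℝ) ⟨6, by norm_num⟩ = 1 := rfl
lemma Cmk7 : (![1, -1, 1, -1, 1, -1, 1, -1] : Fin 8 → ℝ) ⟨7, by norm_num⟩ = -1 := rfl
lemma Vmk7 : (![-1, 1, -1, 1, 1, 1, 1, 1] : Fin 8 → ℝ) ⟨7, by norm_num⟩ = 1 := rfl
lemma Cn5 : (![1, -1, 1, -1, 1, -1, 1, -1] : Fin 8 → ℝ) 5 = -1 := rfl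
lemma Vn5 : (![-1, 1, -1, 1, 1, 1, 1, 1] : Fin 8 → ℝ) 5 = 1 := rfl
lemma Cn6 : (![1, -1, 1, -1, 1, -1, 1, -1] : Fin 8 → ℝ) 6 = 1 := rfl
lemma Vn6 : (![-1, 1, -1, 1, 1, 1, 1, 1] : Fin 8 → ℝ) 6 = 1 := rfl
lemma Cn7 : (![1, -1, 1, -1, 1, -1, 1, -1] : Fin 8 → ℝ) 7 = -1 := rfl
lemma Vn7 : (![-1, 1, -1, 1, 1, 1, 1, 1] : Fin 8 → ℝ) 7 = 1 := rfl

set_option maxHeartbeats 2000000 in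
theorem stmt_18 (c v₁ : Fin 8 → ℝ)
    (hc : c = ![1, -1, 1, -1, 1, -1, 1, -1])
    (hv : v₁ = ![-1, 1, -1, 1, 1, 1, 1, 1]) :
    (Submodule.span ℤ
        (Set.range fun i : Fin 8 =>
          ((2 : ℝ) • (Pi.single i (1 : ℝ) : Fin 8 → ℝ) + c i • v₁ : Fin 8 → ℝ)) :
      Set (Fin 8 → ℝ)) = (2 : ℝ) • GammaEightOdd := by
  subst hc hv
  set G : Fin 8 → (Fin 8 → ℝ) := fun i : Fin 8 =>
      ((2 : ℝ) • (Pi.single i (1 : ℝ) : Fin 8 → ℝ) +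
        (![1, -1, 1, -1, 1, -1, 1, -1] : Fin 8 → ℝ) i •
          (![-1, 1, -1, 1, 1, 1, 1, 1] : Fin 8 → ℝ)) with hG
  have hGval : ∀ i j : Fin 8, G i j =
      2 * (if j = i then (1 : ℝ) else 0) +
        (![1, -1, 1, -1, 1, -1, 1, -1] : Fin 8 → ℝ) i *
          (![-1, 1, -1, 1, 1, 1, 1, 1] : Fin 8 → ℝ) j := by
    intro i j
    simp only [hG, Pi.add_apply, Pi.smul_apply, smul_eq_mul, Pi.single_apply]
  rw [← Qset_eq]
  apply Set.Subset.antisymm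
  · -- span ⊆ Qset
    have hle : Submodule.span ℤ (Set.range G) ≤ AddSubgroup.toIntSubmodule Qgrp := by
      rw [Submodule.span_le]
      rintro _ ⟨i, rfl⟩
      show G i ∈ Qset
      fin_cases i <;>
        refine Or.inr ⟨fun j => hodd_aux _ ?_, hsum_aux _ ?_⟩ <;>
      first
        | (fin_cases j <;> rw [hGval])
        | simp only [Fin.sum_univ_eight, hGval]
      all_goals simp (config := { decide := true }) [Cmk0, Vmk0, Cmk1, Vmk1, Cmk2, Vmk2, Cmk3, Vmk3, Cmk4, Vmk4, Cmk5, Vmk5, Cmk6, Vmk6, Cmk7, Vmk7, Cn5, Vn5, Cn6, Vn6, Cn7, Vn7]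
      all_goals try norm_num
    intro y hy
    exact hle hy
  · rintro y (⟨h1, m, hm⟩ | ⟨h1, m, hm⟩) <;> choose z hz using h1 <;>
      rw [Fin.sum_univ_eight] at hm <;>
      simp only [hz] at hm <;> push_cast at hm
    · -- all coordinates even
      set u : ℤ := m - (z 1 + z 3 + z 5 + z 7) with hu
      set a : Fin 8 → ℤ :=
        ![z 0 - u, z 1 + u, z 2 - u, z 3 + u, z 4 + u, z 5 + u, z 6 + u, z 7 + u] with ha
      have huR : (u : ℝ) = m - (z 1 + z 3 + z 5 + z 7) := by rw [hu]; push_cast; ring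
      have hA0 : a 0 = z 0 - u := rfl
      have hA1 : a 1 = z 1 + u := rfl
      have hA2 : a 2 = z 2 - u := rfl
      have hA3 : a 3 = z 3 + u := rfl
      have hA4 : a 4 = z 4 + u := rfl
      have hA5 : a 5 = z 5 + u := rfl
      have hA6 : a 6 = z 6 + u := rfl
      have hA7 : a 7 = z 7 + u := rfl
      have key : y = ∑ i, a i • G i := by
        funext j
        rw [Finset.sum_apply]
        simp only [Pi.smul_apply, zsmul_eq_mul, Fin.sum_univ_eight, hGval,
          hA0, hA1, hA2, hA3, hA4, hA5, hA6, hA7]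
        fin_cases j <;>
          · simp (config := { decide := true }) [hz, Cmk0, Vmk0, Cmk1, Vmk1, Cmk2, Vmk2, Cmk3, Vmk3, Cmk4, Vmk4, Cmk5, Vmk5, Cmk6, Vmk6, Cmk7, Vmk7, Cn5, Vn5, Cn6, Vn6, Cn7, Vn7]
            push_cast [huR]
            linarith [hm]
      rw [SetLike.mem_coe, key]
      exact Submodule.sum_mem _ fun i _ =>
        Submodule.smul_mem _ _ (Submodule.subset_span ⟨i, rfl⟩)
    · -- all coordinates odd
      set u : ℤ := m - 1 - (z 1 + z 3 + z 5 + z 7) with hu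
      set a : Fin 8 → ℤ :=
        ![z 0 + 1 - u, z 1 + u, z 2 + 1 - u, z 3 + u, z 4 + u, z 5 + u, z 6 + u, z 7 + u] with ha
      have huR : (u : ℝ) = m - 1 - (z 1 + z 3 + z 5 + z 7) := by rw [hu]; push_cast; ring
      have hA0 : a 0 = z 0 + 1 - u := rfl
      have hA1 : a 1 = z 1 + u := rfl
      have hA2 : a 2 = z 2 + 1 - u := rfl
      have hA3 : a 3 = z 3 + u := rfl
      have hA4 : a 4 = z 4 + u := rfl
      have hA5 : a 5 = z 5 + u := rfl
      have hA6 : a 6 = z 6 + u := rfl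
      have hA7 : a 7 = z 7 + u := rfl
      have key : y = ∑ i, a i • G i := by
        funext j
        rw [Finset.sum_apply]
        simp only [Pi.smul_apply, zsmul_eq_mul, Fin.sum_univ_eight, hGval,
          hA0, hA1, hA2, hA3, hA4, hA5, hA6, hA7]
        fin_cases j <;>
          · simp (config := { decide := true }) [hz, Cmk0, Vmk0, Cmk1, Vmk1, Cmk2, Vmk2, Cmk3, Vmk3, Cmk4, Vmk4, Cmk5, Vmk5, Cmk6, Vmk6, Cmk7, Vmk7, Cn5, Vn5, Cn6, Vn6, Cn7, Vn7]
            push_cast [huR]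
            linarith [hm]
      rw [SetLike.mem_coe, key]
      exact Submodule.sum_mem _ fun i _ =>
        Submodule.smul_mem _ _ (Submodule.subset_span ⟨i, rfl⟩)
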